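/- Let R be a root system in a finite-dimensional real inner product space V and let Q ∈ 𝔔(R). Then there exists a linear functional f : V → ℝ with f(α) = 1 for every α ∈ Q, if and only if the sets Q*_h (h ∈ ℤ) are pairwise disjoint, i.e. Q*_h ∩ Q*_k = ∅ whenever h ≠ k. -/

import Mathlib

open scoped BigOperators

/-- ℚ-duality certificate: if every rational kernel vector of `N` has coordinate
sum zero, there is a rational left-certificate `y` with `yᵀ N = 𝟙`. -/
lemma exists_cert {ι : Type*} [Fintype ι] [DecidableEq ι] (N : Matrix ι ι ℚ)
    (h : ∀ c : ι → ℚ, N.mulVec c = 0 → ∑ i, c i = 0) :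
    ∃ y : ι → ℚ, ∀ i, ∑ j, y j * N j i = 1 := by
  classical
  set s : Module.Dual ℚ (ι → ℚ) := ∑ i, LinearMap.proj i with hs
  have hmem : s ∈ (LinearMap.ker N.mulVecLin).dualAnnihilator := by
    rw [Submodule.mem_dualAnnihilator]
    intro x hx
    have hx' : N.mulVec x = 0 := by simpa using hx
    simpa [hs, LinearMap.sum_apply] using h x hx'
  rw [← LinearMap.range_dualMap_eq_dualAnnihilator_ker] at hmem
  obtain ⟨g, hg⟩ := hmem
  refine ⟨fun j => g (Pi.single j 1), fun i => ?_⟩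
  have h1 : s (Pi.single i 1) = 1 := by
    simp [hs, LinearMap.sum_apply, Pi.single_apply]
  have h2 : s (Pi.single i 1) = g (fun j => N j i) := by
    rw [← hg]; simp [LinearMap.dualMap_apply, Matrix.mulVecLin_apply]; rfl
  have h3 : g (fun j => N j i) = ∑ j, N j i * g (Pi.single j 1) := by
    have h4 := LinearMap.pi_apply_eq_sum_univ g (fun j => N j i)
    simp only [smul_eq_mul] at h4
    rw [h4]
    refine Finset.sum_congr rfl fun x _ => ?_
    have hx : (fun j => if x = j then (1:ℚ) else 0) = Pi.single x 1 := by
      ext j; simp [Pi.single_apply, eq_comm]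
    rw [hx]
  calc ∑ j, (fun j => g (Pi.single j 1)) j * N j i
      = ∑ j, N j i * g (Pi.single j 1) := by
        exact Finset.sum_congr rfl fun j _ => mul_comm _ _
    _ = g (fun j => N j i) := h3.symm
    _ = s (Pi.single i 1) := h2.symm
    _ = 1 := h1



/-- `R` is a root system in the real inner product space `V`. -/
def IsRootSystem {V : Type*} [NormedAddCommGroup V] [InnerProductSpace ℝ V]
    (R : Set V) : Prop :=
  R.Finite ∧ (0 : V) ∉ R ∧ Submodule.span ℝ R = ⊤ ∧
  (∀ α ∈ R, ∀ β ∈ R, ∃ k : ℤ, 2 * (inner ℝ β α : ℝ) / (inner ℝ α α : ℝ) = (k : ℝ)) ∧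
  (∀ α ∈ R, ∀ β ∈ R, β - (2 * (inner ℝ β α : ℝ) / (inner ℝ α α : ℝ)) • α ∈ R) ∧
  (∀ α ∈ R, ∀ t : ℝ, t • α ∈ R → t = 1 ∨ t = -1)

/-- `Q ∈ 𝔔(R)`: (i) `Q ∩ (−Q) = ∅` and `α + β ∉ R` for all `α, β ∈ Q`;
(ii) every element of `R` is a ℤ-linear combination of elements of `Q`. -/
def MemQSet {V : Type*} [AddCommGroup V] (R Q : Set V) : Prop :=
  Q ⊆ R ∧ (∀ α ∈ Q, -α ∉ Q) ∧ (∀ α ∈ Q, ∀ β ∈ Q, α + β ∉ R) ∧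
  (∀ γ ∈ R, γ ∈ Submodule.span ℤ Q)

/-- `Q*_h`: roots that are ℤ-linear combinations of elements of `Q` with
coefficient sum `h`. -/
def Qstar {V : Type*} [AddCommGroup V] (R Q : Set V) (h : ℤ) : Set V :=
  {α ∈ R | ∃ k : V →₀ ℤ, ↑k.support ⊆ Q ∧ (k.sum fun β n => n • β) = α ∧
    (k.sum fun _ n => n) = h}

/-- `Q*₍₁,₁₎`: roots of the form `±(β₁ − β₂)` with `β₁, β₂ ∈ Q`. -/
def Qstar11 {V : Type*} [AddCommGroup V] (R Q : Set V) : Set V :=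
  {α ∈ R | ∃ β₁ ∈ Q, ∃ β₂ ∈ Q, α = β₁ - β₂ ∨ α = β₂ - β₁}

/-- Criterion for the J-property of the CR algebra of the complete flag
determined by `Q`: there is a linear functional equal to `1` on `Q`
iff the sets `Q*_h` are pairwise disjoint (i.e. `⊕ 𝔤^{(h)}` is a ℤ-gradation). -/
theorem stmt_12 {V : Type*} [NormedAddCommGroup V] [InnerProductSpace ℝ V]
    [FiniteDimensional ℝ V]
    (R : Set V) (hR : IsRootSystem R) (Q : Set V) (hQ : MemQSet R Q) :
    (∃ f : V →ₗ[ℝ] ℝ, ∀ α ∈ Q, f α = 1) ↔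
    (∀ h k : ℤ, h ≠ k → Qstar R Q h ∩ Qstar R Q k = ∅) := by
  classical
  obtain ⟨hRfin, hR0, hRspan, hRint, -, -⟩ := hR
  obtain ⟨hQR, -, -, hQspan⟩ := hQ
  constructor
  · rintro ⟨f, hf⟩ h k hne
    have key : ∀ (H : ℤ), ∀ α ∈ Qstar R Q H, f α = (H : ℝ) := by
      rintro H α ⟨-, m, hsupp, hsum, hH⟩
      have h1 : f (m.sum fun β n => n • β) = m.sum fun β n => (n : ℝ) := by
        rw [map_finsuppSum]
        refine Finsupp.sum_congr fun β hβ => ?_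
        rw [map_zsmul, hf β (hsupp hβ)]
        simp
      have h2 : (m.sum fun β n => (n:ℝ)) = ((m.sum fun _ n => n : ℤ) : ℝ) := by
        simp [Finsupp.sum]
      rw [hsum] at h1
      rw [h1, h2, hH]
    ext α
    simp only [Set.mem_inter_iff, Set.mem_empty_iff_false, iff_false]
    rintro ⟨hh, hk⟩
    have e1 := key h α hh
    have e2 := key k α hk
    rw [e1] at e2
    exact hne (by exact_mod_cast e2)
  · intro hdisj
    rcases Q.eq_empty_or_nonempty with hQe | ⟨γ, hγ⟩
    · refine ⟨0, fun α hα => ?_⟩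
      rw [hQe] at hα
      exact absurd hα (Set.notMem_empty α)
    have hγR : γ ∈ R := hQR hγ
    have hQfin : Q.Finite := hRfin.subset hQR
    set Qf : Finset V := hQfin.toFinset with hQfdef
    have hmemQ : ∀ i : {x // x ∈ Qf}, (i : V) ∈ Q := fun i => hQfin.mem_toFinset.mp i.2
    set ι := {x // x ∈ Qf}
    -- the evaluation map
    set T : (ι → ℝ) →ₗ[ℝ] V :=
      { toFun := fun c => ∑ i, c i • (i : V)
        map_add' := by
          intro x y; simp [add_smul, Finset.sum_add_distrib]
        map_smul' := by
          intro r x; simp [smul_smul, Finset.smul_sum] } with hTdef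
    have hTapply : ∀ c : ι → ℝ, T c = ∑ i, c i • (i : V) := fun _ => rfl
    have hTsingle : ∀ i : ι, T (Pi.single i 1) = (i : V) := by
      intro i
      rw [hTapply]
      rw [Finset.sum_eq_single i]
      · simp
      · intro j _ hj; simp [Pi.single_apply, hj]
      · simp
    -- `Q` spans `V`
    have hspanQ : Submodule.span ℝ Q = ⊤ := by
      have h1 : Submodule.span ℤ Q ≤ (Submodule.span ℝ Q).restrictScalars ℤ :=
        Submodule.span_le.mpr Submodule.subset_span
      have h2 : R ⊆ (Submodule.span ℝ Q : Set V) := fun x hx => h1 (hQspan x hx)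
      rw [eq_top_iff, ← hRspan]
      exact Submodule.span_le.mpr h2
    have hTsurj : Function.Surjective T := by
      rw [← LinearMap.range_eq_top, eq_top_iff, ← hspanQ]
      refine Submodule.span_le.mpr ?_
      intro β hβ
      exact ⟨Pi.single ⟨β, hQfin.mem_toFinset.mpr hβ⟩ 1,
        hTsingle ⟨β, hQfin.mem_toFinset.mpr hβ⟩⟩
    -- Cartan matrix
    have hNint : ∀ i j : ι, ∃ k : ℤ,
        2 * (inner ℝ (j:V) (i:V) : ℝ) / (inner ℝ (i:V) (i:V) : ℝ) = (k : ℝ) :=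
      fun i j => hRint _ (hQR (hmemQ i)) _ (hQR (hmemQ j))
    set N : Matrix ι ι ℚ := fun i j => ((hNint i j).choose : ℚ) with hNdef
    have hNspec : ∀ i j : ι,
        2 * (inner ℝ (j:V) (i:V) : ℝ) / (inner ℝ (i:V) (i:V) : ℝ) = ((N i j : ℚ) : ℝ) := by
      intro i j
      rw [(hNint i j).choose_spec, hNdef]
      norm_num
    have hinner0 : ∀ i : ι, (inner ℝ (i:V) (i:V) : ℝ) ≠ 0 := by
      intro i hz
      have : (i:V) = 0 := (inner_self_eq_zero (𝕜 := ℝ)).mp hz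
      exact hR0 (this ▸ hQR (hmemQ i))
    -- key identity
    have hmv : ∀ (c : ι → ℝ) (i : ι),
        (∑ j, ((N i j : ℚ) : ℝ) * c j)
          = (2 / (inner ℝ (i:V) (i:V) : ℝ)) * (inner ℝ (T c) (i:V) : ℝ) := by
      intro c i
      have hTin : (inner ℝ (T c) (i:V) : ℝ) = ∑ j, c j * (inner ℝ (j:V) (i:V) : ℝ) := by
        rw [hTapply, sum_inner]
        exact Finset.sum_congr rfl fun j _ => real_inner_smul_left _ _ _
      rw [hTin, Finset.mul_sum]
      refine Finset.sum_congr rfl fun j _ => ?_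
      rw [← hNspec i j]
      field_simp
    -- direction A: T c = 0 → N-kernel
    have hdirA : ∀ c : ι → ℝ, T c = 0 → ∀ i, ∑ j, ((N i j : ℚ) : ℝ) * c j = 0 := by
      intro c hc i
      rw [hmv c i, hc, inner_zero_left, mul_zero]
    -- direction B: N-kernel → T c = 0
    have hdirB : ∀ c : ι → ℝ, (∀ i, ∑ j, ((N i j : ℚ) : ℝ) * c j = 0) → T c = 0 := by
      intro c hc
      have h5 : ∀ β ∈ Q, (inner ℝ (T c) β : ℝ) = 0 := by
        intro β hβ
        set i : ι := ⟨β, hQfin.mem_toFinset.mpr hβ⟩ with hidef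
        have := hc i
        rw [hmv c i] at this
        rcases mul_eq_zero.mp this with h' | h'
        · exact absurd h' (by
            intro hz
            rcases div_eq_zero_iff.mp hz with h2 | h2
            · norm_num at h2
            · exact hinner0 i h2)
        · exact h'
      have h6 : ∀ x : V, (inner ℝ (T c) x : ℝ) = 0 := by
        intro x
        have hx : x ∈ Submodule.span ℝ Q := by rw [hspanQ]; exact Submodule.mem_top
        induction hx using Submodule.span_induction with
        | mem y hy => exact h5 y hy
        | zero => simp
        | add y z _ _ hy hz => rw [inner_add_right, hy, hz, add_zero]
        | smul a y _ hy => rw [real_inner_smul_right, hy, mul_zero]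
      have := h6 (T c)
      exact inner_self_eq_zero.mp this
    -- integer relations have zero coefficient sum
    have hint : ∀ m : ι → ℤ, (∑ i, (m i : ℝ) • (i:V)) = 0 → (∑ i, m i) = 0 := by
      intro m hm0
      by_contra hS
      set k0 : V →₀ ℤ := Finsupp.mapDomain (Subtype.val) (Finsupp.equivFunOnFinite.symm m)
        with hk0def
      have hk0supp : ↑k0.support ⊆ Q := by
        intro x hx
        rw [hk0def] at hx
        have hx' := Finsupp.mapDomain_support (Finset.mem_coe.mp hx)
        rcases Finset.mem_image.mp hx' with ⟨i, -, rfl⟩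
        exact hmemQ i
      have hk0sum : (k0.sum fun β n => n • β) = ∑ i, m i • (i:V) := by
        rw [hk0def, Finsupp.sum_mapDomain_index (h := fun β n => n • β)
          (fun _ => zero_smul ℤ _) (fun b m₁ m₂ => add_smul m₁ m₂ b)]
        rw [Finsupp.sum_fintype _ (fun (a : ι) (n : ℤ) => n • (a : V)) (fun _ => zero_smul ℤ _)]
        rw [Finset.univ_eq_attach]
        refine Finset.sum_congr rfl fun i _ => ?_
        simp
      have hk0wt : (k0.sum fun _ n => n) = ∑ i, m i := by
        rw [hk0def, Finsupp.sum_mapDomain_index (h := fun _ n => n)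
          (fun _ => rfl) (fun _ _ _ => rfl)]
        rw [Finsupp.sum_fintype _ (fun (_ : ι) (n : ℤ) => n) (fun _ => rfl)]
        rw [Finset.univ_eq_attach]
        refine Finset.sum_congr rfl fun i _ => ?_
        simp
      have hzsmul : (∑ i, m i • (i:V)) = 0 := by
        rw [← hm0]
        exact Finset.sum_congr rfl fun i _ => (Int.cast_smul_eq_zsmul ℝ (m i) _).symm
      have hss : ((Finsupp.single γ (1:ℤ)).sum fun β n => n • β) = (1:ℤ) • γ :=
        Finsupp.sum_single_index (zero_smul ℤ γ)
      have hsw : ((Finsupp.single γ (1:ℤ)).sum fun _ n => n) = 1 :=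
        Finsupp.sum_single_index rfl
      have hadd : ((Finsupp.single γ (1:ℤ) + k0).sum fun β n => n • β)
          = ((Finsupp.single γ (1:ℤ)).sum fun β n => n • β)
            + (k0.sum fun β n => n • β) :=
        Finsupp.sum_add_index' (fun b => zero_smul ℤ b) (fun b m₁ m₂ => add_smul m₁ m₂ b)
      have haddw : ((Finsupp.single γ (1:ℤ) + k0).sum fun _ n => n)
          = ((Finsupp.single γ (1:ℤ)).sum fun _ n => n) + (k0.sum fun _ n => n) :=
        Finsupp.sum_add_index' (fun _ => rfl) (fun _ _ _ => rfl)
      have mem1 : γ ∈ Qstar R Q 1 := by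
        refine ⟨hγR, Finsupp.single γ 1, ?_, ?_, ?_⟩
        · intro x hx
          have := Finsupp.support_single_subset (Finset.mem_coe.mp hx)
          rw [Finset.mem_singleton] at this
          rw [this]; exact hγ
        · rw [hss, one_smul]
        · rw [hsw]
      have mem2 : γ ∈ Qstar R Q (1 + ∑ i, m i) := by
        refine ⟨hγR, Finsupp.single γ 1 + k0, ?_, ?_, ?_⟩
        · intro x hx
          have := Finsupp.support_add (Finset.mem_coe.mp hx)
          rcases Finset.mem_union.mp this with h' | h'
          · have := Finsupp.support_single_subset h'
            rw [Finset.mem_singleton] at this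
            rw [this]; exact hγ
          · exact hk0supp h'
        · rw [hadd, hss, one_smul, hk0sum, hzsmul, add_zero]
        · rw [haddw, hsw, hk0wt]
      have hne : (1 : ℤ) ≠ 1 + ∑ i, m i := by omega
      have := hdisj 1 (1 + ∑ i, m i) hne
      have : γ ∈ (∅ : Set V) := this ▸ Set.mem_inter mem1 mem2
      exact absurd this (Set.notMem_empty γ)
    -- rational kernel has zero sum
    have hq : ∀ c : ι → ℚ, N.mulVec c = 0 → ∑ i, c i = 0 := by
      intro c hc
      obtain ⟨b, hb⟩ := IsLocalization.exist_integer_multiples_of_finite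
        (nonZeroDivisors ℤ) c
      choose m hm using hb
      have hmq : ∀ i, (m i : ℚ) = ((b : ℤ) : ℚ) * c i := by
        intro i
        have := hm i
        simpa [IsLocalization.IsInteger, zsmul_eq_mul, eq_comm] using this
      have hcomp : ∀ i, ∑ j, N i j * c j = 0 := by
        intro i
        have := congrFun hc i
        simpa [Matrix.mulVec, dotProduct] using this
      have hker : ∀ i, ∑ j, ((N i j : ℚ) : ℝ) * ((m j : ℤ) : ℝ) = 0 := by
        intro i
        have hq1 : ∑ j, N i j * (m j : ℚ) = 0 := by
          calc ∑ j, N i j * (m j : ℚ) = ∑ j, ((b:ℤ):ℚ) * (N i j * c j) := by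
                refine Finset.sum_congr rfl fun j _ => ?_
                rw [hmq j]; ring
            _ = ((b:ℤ):ℚ) * ∑ j, N i j * c j := by rw [Finset.mul_sum]
            _ = 0 := by rw [hcomp i, mul_zero]
        have := congrArg (fun q : ℚ => (q : ℝ)) hq1
        push_cast at this ⊢
        exact this
      have hT0 : T (fun i => ((m i : ℤ) : ℝ)) = 0 := hdirB _ hker
      have hsum0 : (∑ i, m i) = 0 := by
        apply hint
        rw [← hTapply]
        exact hT0
      have hbq : ((b : ℤ) : ℚ) ≠ 0 := by
        have : (b : ℤ) ≠ 0 := nonZeroDivisors.coe_ne_zero b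
        exact_mod_cast this
      have : ((b:ℤ):ℚ) * ∑ i, c i = 0 := by
        rw [Finset.mul_sum]
        calc ∑ i, ((b:ℤ):ℚ) * c i = ∑ i, (m i : ℚ) := by
              exact Finset.sum_congr rfl fun i _ => (hmq i).symm
          _ = ((∑ i, m i : ℤ) : ℚ) := by push_cast; rfl
          _ = 0 := by rw [hsum0]; norm_num
      exact (mul_eq_zero.mp this).resolve_left hbq
    -- certificate, real kernel
    obtain ⟨y, hy⟩ := exists_cert N hq
    have hrker : ∀ c : ι → ℝ, (∀ i, ∑ j, ((N i j : ℚ) : ℝ) * c j = 0) → ∑ i, c i = 0 := by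
      intro c hc
      have hy' : ∀ i, ∑ j, ((y j : ℚ) : ℝ) * ((N j i : ℚ) : ℝ) = 1 := by
        intro i
        have := congrArg (fun q : ℚ => (q : ℝ)) (hy i)
        push_cast at this ⊢
        exact this
      calc ∑ i, c i = ∑ i, (∑ j, ((y j :ℚ):ℝ) * ((N j i :ℚ):ℝ)) * c i := by
            refine Finset.sum_congr rfl fun i _ => ?_
            rw [hy' i, one_mul]
        _ = ∑ i, ∑ j, ((y j :ℚ):ℝ) * (((N j i :ℚ):ℝ) * c i) := by
            refine Finset.sum_congr rfl fun i _ => ?_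
            rw [Finset.sum_mul]
            exact Finset.sum_congr rfl fun j _ => by ring
        _ = ∑ j, ((y j :ℚ):ℝ) * ∑ i, ((N j i :ℚ):ℝ) * c i := by
            rw [Finset.sum_comm]
            exact Finset.sum_congr rfl fun j _ => by rw [Finset.mul_sum]
        _ = 0 := by
            refine Finset.sum_eq_zero fun j _ => ?_
            rw [hc j, mul_zero]
    -- build the functional
    obtain ⟨σ, hσ⟩ := T.exists_rightInverse_of_surjective (LinearMap.range_eq_top.mpr hTsurj)
    set sR : (ι → ℝ) →ₗ[ℝ] ℝ := ∑ i, LinearMap.proj i with hsRdef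
    have hsRapply : ∀ c : ι → ℝ, sR c = ∑ i, c i := by
      intro c; rw [hsRdef]; simp [LinearMap.sum_apply]
    refine ⟨sR.comp σ, ?_⟩
    intro β hβ
    set i : ι := ⟨β, hQfin.mem_toFinset.mpr hβ⟩ with hidef
    have hTσ : T (σ β) = β := by
      have := LinearMap.congr_fun hσ β
      simpa using this
    have h1 : T (σ β - Pi.single i 1) = 0 := by
      rw [map_sub, hTσ, hTsingle i, sub_self]
    have h2 : sR (σ β - Pi.single i 1) = 0 := by
      rw [hsRapply]
      exact hrker _ (hdirA _ h1)
    have h3 : sR (Pi.single i 1) = 1 := by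
      rw [hsRapply, Finset.sum_eq_single i]
      · simp
      · intro j _ hj; simp [Pi.single_apply, hj]
      · simp
    have h4 : sR (σ β) = sR (σ β - Pi.single i 1) + sR (Pi.single i 1) := by
      rw [← map_add]; congr 1; abel
    rw [LinearMap.comp_apply, h4, h2, h3, zero_add]
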